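/- Let c₁, c₂ ∈ ℂ and set R = max(2, |c₁|, |c₂|). If (zₙ) is the alternated orbit of z₀ (z_{n+1} = zₙ² + c₁ for n even, z_{n+1} = zₙ² + c₂ for n odd) and there exists N ∈ ℕ with |z_N| > R, then |zₙ| → ∞ as n → ∞; in particular the alternated orbit is unbounded. -/

import Mathlib

/-- The alternated orbit of `z₀` with parameters `c₁, c₂`:
`z_{n+1} = zₙ² + c₁` if `n` is even, `z_{n+1} = zₙ² + c₂` if `n` is odd. -/
def altOrbit (c₁ c₂ z₀ : ℂ) : ℕ → ℂ
  | 0 => z₀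
  | n + 1 => if Even n then (altOrbit c₁ c₂ z₀ n) ^ 2 + c₁
             else (altOrbit c₁ c₂ z₀ n) ^ 2 + c₂

/-- The alternated filled Julia set `K_{P_{c₁ c₂}}`. -/
def altK (c₁ c₂ : ℂ) : Set ℂ :=
  {z₀ | Bornology.IsBounded (Set.range (altOrbit c₁ c₂ z₀))}

theorem stmt_8 (c₁ c₂ z₀ : ℂ)
    (R : ℝ) (hR : R = max 2 (max (‖c₁‖) (‖c₂‖)))
    (N : ℕ) (hN : R < ‖altOrbit c₁ c₂ z₀ N‖) :
    Filter.Tendsto (fun n : ℕ => ‖altOrbit c₁ c₂ z₀ n‖)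
      Filter.atTop Filter.atTop ∧
    ¬ Bornology.IsBounded (Set.range (altOrbit c₁ c₂ z₀)) := by
  set z := altOrbit c₁ c₂ z₀ with hz
  have hR2 : (2:ℝ) ≤ R := hR ▸ le_max_left _ _
  have hc1 : ‖c₁‖ ≤ R := hR ▸ le_trans (le_max_left _ _) (le_max_right _ _)
  have hc2 : ‖c₂‖ ≤ R := hR ▸ le_trans (le_max_right _ _) (le_max_right _ _)
  set a := ‖z N‖ with ha
  have haR : R < a := hN
  have ha2 : (2:ℝ) < a := lt_of_le_of_lt hR2 haR
  have key : ∀ n, a ≤ ‖z n‖ →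
      (a - 1) * ‖z n‖ ≤ ‖z (n + 1)‖ := by
    intro n hn
    have hstep : z (n + 1) = z n ^ 2 + (if Even n then c₁ else c₂) := by
      rw [hz]
      by_cases h : Even n <;> simp [altOrbit, h]
    have hcle : ‖(if Even n then c₁ else c₂)‖ ≤ R := by
      split <;> assumption
    have h1 : ‖z n ^ 2‖ - R ≤ ‖z (n + 1)‖ := by
      have := norm_add_le (z (n+1)) (-(if Even n then c₁ else c₂))
      rw [hstep] at this ⊢
      simp only [add_neg_cancel_right, norm_neg] at this
      linarith
    rw [norm_pow] at h1
    nlinarith [hn, haR, hR2, norm_nonneg (z n)]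
  have hgrow : ∀ k, a * (a - 1) ^ k ≤ ‖z (N + k)‖ := by
    intro k
    induction k with
    | zero => simp [ha]
    | succ k ih =>
      have h1 : (1:ℝ) ≤ (a - 1) ^ k := one_le_pow₀ (by linarith)
      have hak : a ≤ ‖z (N + k)‖ := by
        calc a = a * 1 := by ring
        _ ≤ a * (a - 1) ^ k := by nlinarith
        _ ≤ _ := ih
      have h2 := key (N + k) hak
      calc a * (a - 1) ^ (k + 1) = (a - 1) * (a * (a - 1) ^ k) := by ring
      _ ≤ (a - 1) * ‖z (N + k)‖ := by nlinarith
      _ ≤ ‖z (N + k + 1)‖ := h2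
  have htend : Filter.Tendsto (fun n : ℕ => ‖z n‖) Filter.atTop Filter.atTop := by
    have hT : Filter.Tendsto (fun k : ℕ => a * (a - 1) ^ k) Filter.atTop Filter.atTop :=
      (tendsto_pow_atTop_atTop_of_one_lt (by linarith : (1:ℝ) < a - 1)).const_mul_atTop
        (by linarith : (0:ℝ) < a)
    have hgrow' : ∀ k : ℕ, a * (a - 1) ^ k ≤ ‖z (k + N)‖ := fun k => by
      rw [Nat.add_comm]; exact hgrow k
    rw [← Filter.tendsto_add_atTop_iff_nat N]
    exact Filter.tendsto_atTop_mono hgrow' hT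
  refine ⟨htend, fun hb => ?_⟩
  obtain ⟨C, hC⟩ := isBounded_iff_forall_norm_le.mp hb
  obtain ⟨n, hn⟩ := (htend.eventually_gt_atTop C).exists
  exact absurd (hC _ (Set.mem_range_self n)) (not_le.mpr hn)
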